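/- arXiv:2410.13940 — 3 statements merged into one kernel-verified Lean document; each statement's English description precedes it below -/
import Mathlib

section
/- Let A₁, A₂ be 2×2 complex matrices with A₁A₂* + A₂A₁* = 0 and rk(A₁, A₂) = 2 (the 2×4 juxtaposed matrix has full rank). Then U := (A₁ + A₂)⁻¹(A₁ − A₂) is unitary. -/
open Matrix

lemma isUnit_of_rank_eq {n : ℕ} (A : Matrix (Fin n) (Fin n) ℂ) (h : A.rank = n) :
    IsUnit A := by
  rw [← Matrix.mulVec_surjective_iff_isUnit]
  have ht : LinearMap.range A.mulVecLin = ⊤ := by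
    apply Submodule.eq_top_of_finrank_eq
    simpa [Matrix.rank] using h
  intro v
  have : v ∈ LinearMap.range A.mulVecLin := ht ▸ Submodule.mem_top
  obtain ⟨x, hx⟩ := this
  exact ⟨x, hx⟩

open scoped ComplexOrder in
lemma rank_smc {m n : Type*} [Fintype m] [Fintype n] (A : Matrix m n ℂ) :
    (A * Aᴴ).rank = A.rank := rank_self_mul_conjTranspose A

theorem stmt6 (A₁ A₂ : Matrix (Fin 2) (Fin 2) ℂ)
    (h : A₁ * A₂ᴴ + A₂ * A₁ᴴ = 0)
    (hrk : (Matrix.fromCols A₁ A₂).rank = 2) :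
    ((A₁ + A₂)⁻¹ * (A₁ - A₂)) * ((A₁ + A₂)⁻¹ * (A₁ - A₂))ᴴ = 1 := by
  set S := A₁ + A₂ with hSdef
  set D := A₁ - A₂ with hDdef
  have hS : S * Sᴴ = A₁ * A₁ᴴ + A₂ * A₂ᴴ := by
    have e : (A₁ + A₂) * (A₁ᴴ + A₂ᴴ) =
        (A₁ * A₁ᴴ + A₂ * A₂ᴴ) + (A₁ * A₂ᴴ + A₂ * A₁ᴴ) := by noncomm_ring
    rw [hSdef, conjTranspose_add, e, h, add_zero]
  have hD : D * Dᴴ = A₁ * A₁ᴴ + A₂ * A₂ᴴ := by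
    have e : (A₁ - A₂) * (A₁ᴴ - A₂ᴴ) =
        (A₁ * A₁ᴴ + A₂ * A₂ᴴ) - (A₁ * A₂ᴴ + A₂ * A₁ᴴ) := by noncomm_ring
    rw [hDdef, conjTranspose_sub, e, h, sub_zero]
  have hfc : fromCols A₁ A₂ * (fromCols A₁ A₂)ᴴ = A₁ * A₁ᴴ + A₂ * A₂ᴴ := by
    rw [conjTranspose_fromCols_eq_fromRows_conjTranspose, fromCols_mul_fromRows]
  have hrank : (S * Sᴴ).rank = 2 := by
    rw [hS, ← hfc, rank_smc, hrk]
  have hUnitSS : IsUnit (S * Sᴴ) := isUnit_of_rank_eq _ hrank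
  have hUnitS : IsUnit S := by
    rw [Matrix.isUnit_iff_isUnit_det] at hUnitSS ⊢
    rw [Matrix.det_mul] at hUnitSS
    exact isUnit_of_mul_isUnit_left hUnitSS
  have hDS : D * Dᴴ = S * Sᴴ := by rw [hS, hD]
  rw [conjTranspose_mul, conjTranspose_nonsing_inv]
  calc S⁻¹ * D * (Dᴴ * (Sᴴ)⁻¹) = S⁻¹ * (D * Dᴴ) * (Sᴴ)⁻¹ := by
        simp only [mul_assoc]
    _ = S⁻¹ * (S * Sᴴ) * (Sᴴ)⁻¹ := by rw [hDS]
    _ = (S⁻¹ * S) * (Sᴴ * (Sᴴ)⁻¹) := by simp only [mul_assoc]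
    _ = 1 := by
        rw [Matrix.nonsing_inv_mul _ ((Matrix.isUnit_iff_isUnit_det S).mp hUnitS),
          Matrix.mul_nonsing_inv _ ((Matrix.isUnit_iff_isUnit_det Sᴴ).mp
            ((Matrix.isUnit_conjTranspose S).mpr hUnitS)), mul_one]
end

section
/- Let a₁, a₂ ∈ ℂ² with a₂ = α a₁ for some α ∈ ℂ and a₁ ≠ 0, and let a₁', a₂' ∈ ℂ². Then |a₁'⟩⟨a₂| + |a₂⟩⟨a₁'| + |a₂'⟩⟨a₁| + |a₁⟩⟨a₂'| = 0 if and only if conj(α) a₁' + a₂' = iλ' a₁ for some λ' ∈ ℝ. -/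
/-- The outer product `|v⟩⟨w|`, the 2×2 matrix with entries `v k * conj (w l)`. -/
noncomputable def outer (v w : Fin 2 → ℂ) : Matrix (Fin 2) (Fin 2) ℂ :=
  fun k l => v k * (starRingEnd ℂ) (w l)

lemma key (a b : Fin 2 → ℂ) (ha : a ≠ 0)
    (h : ∀ k l, b k * (starRingEnd ℂ) (a l) + a k * (starRingEnd ℂ) (b l) = 0) :
    ∃ t : ℝ, b = (Complex.I * (t : ℂ)) • a := by
  obtain ⟨k, hk⟩ : ∃ k, a k ≠ 0 := by
    by_contra hc
    push_neg at hc
    exact ha (funext hc)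
  set c : ℂ := b k * (starRingEnd ℂ) (a k) with hc
  have hck : (starRingEnd ℂ) c = -c := by
    have := h k k
    have hconj : (starRingEnd ℂ) c = a k * (starRingEnd ℂ) (b k) := by
      simp [hc, map_mul, mul_comm]
    linear_combination hconj + this
  have hre : c.re = 0 := by
    have := congrArg Complex.re hck
    simp [Complex.conj_re] at this
    linarith
  have hcim : c = Complex.I * (c.im : ℂ) := by
    rw [mul_comm]
    exact (Complex.re_add_im c ▸ by rw [hre]; simp)
  have hns : (Complex.normSq (a k) : ℂ) ≠ 0 := by
    simpa [Complex.normSq_eq_zero] using hk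
  refine ⟨c.im / Complex.normSq (a k), funext fun l => ?_⟩
  have hl := h l k
  have hbk : a k * (starRingEnd ℂ) (b k) = -c := by
    rw [← hck]; simp [hc, map_mul, mul_comm]
  have hmul : b l * (Complex.normSq (a k) : ℂ) = a l * c := by
    have h1 : b l * (starRingEnd ℂ) (a k) = - (a l * (starRingEnd ℂ) (b k)) := by
      linear_combination h l k
    have h2 : b l * ((starRingEnd ℂ) (a k) * a k) = - (a l * (a k * (starRingEnd ℂ) (b k))) := by
      linear_combination a k * h1
    rw [hbk] at h2
    rw [show ((Complex.normSq (a k) : ℝ) : ℂ) = (starRingEnd ℂ) (a k) * a k by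
      rw [mul_comm]; exact (Complex.mul_conj (a k)).symm]
    linear_combination h2
  have : b l = a l * c / (Complex.normSq (a k) : ℂ) := by
    field_simp at hmul ⊢
    linear_combination hmul
  rw [this, hcim]
  simp only [Pi.smul_apply, smul_eq_mul, Complex.ofReal_div]
  field_simp
  ring
  simp

theorem stmt8 (a₁ a₂ a₁' a₂' : Fin 2 → ℂ) (α : ℂ)
    (ha : a₁ ≠ 0) (h2 : a₂ = α • a₁) :
    outer a₁' a₂ + outer a₂ a₁' + outer a₂' a₁ + outer a₁ a₂' = 0 ↔
      ∃ l : ℝ, (starRingEnd ℂ α) • a₁' + a₂' = (Complex.I * (l : ℂ)) • a₁ := by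
  set b : Fin 2 → ℂ := (starRingEnd ℂ α) • a₁' + a₂' with hb
  have hentry : ∀ k l, (outer a₁' a₂ + outer a₂ a₁' + outer a₂' a₁ + outer a₁ a₂') k l
      = b k * (starRingEnd ℂ) (a₁ l) + a₁ k * (starRingEnd ℂ) (b l) := by
    intro k l
    simp only [Matrix.add_apply, outer, h2, hb, Pi.add_apply, Pi.smul_apply, smul_eq_mul,
      map_mul, map_add, Complex.conj_conj]
    ring
  constructor
  · intro h
    refine key a₁ b ha fun k l => ?_
    rw [← hentry k l, h]
    simp
  · rintro ⟨t, ht⟩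
    ext k l
    rw [hentry k l, ht]
    simp only [Pi.smul_apply, smul_eq_mul, map_mul, Complex.conj_I, Complex.conj_ofReal,
      Matrix.zero_apply]
    ring
end

section
/- Let a₁, a₂ ∈ ℂ² be linearly independent and let a₁', a₂' ∈ ℂ². Then |a₁'⟩⟨a₂| + |a₂⟩⟨a₁'| + |a₂'⟩⟨a₁| + |a₁⟩⟨a₂'| = 0 if and only if there exist μ' ∈ ℂ and λ₁', λ₂' ∈ ℝ such that a₁' = μ' a₁ + iλ₁' a₂ and a₂' = −conj(μ') a₂ + iλ₂' a₁. -/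
open scoped Matrix

private lemma outer_coeffs (a₁ a₂ : Fin 2 → ℂ) (h : LinearIndependent ℂ ![a₁, a₂])
    (α β γ δ : ℂ) :
    (outer (α•a₁+β•a₂) a₂ + outer a₂ (α•a₁+β•a₂) + outer (γ•a₁+δ•a₂) a₁ + outer a₁ (γ•a₁+δ•a₂) = 0)
    ↔ (γ + (starRingEnd ℂ) γ = 0 ∧ α + (starRingEnd ℂ) δ = 0 ∧ β + (starRingEnd ℂ) β = 0) := by
  set A : Matrix (Fin 2) (Fin 2) ℂ := Matrix.of ![a₁, a₂] with hA
  have hUA : IsUnit A := by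
    rw [← Matrix.linearIndependent_rows_iff_isUnit]
    exact h
  have hUT : IsUnit Aᵀ := by rw [Matrix.isUnit_transpose]; exact hUA
  have hUH : IsUnit Aᵀᴴ := by
    rw [Matrix.isUnit_iff_isUnit_det, Matrix.det_conjTranspose] at *
    exact hUT.star
  set C : Matrix (Fin 2) (Fin 2) ℂ :=
    !![γ + (starRingEnd ℂ) γ, α + (starRingEnd ℂ) δ;
       (starRingEnd ℂ) α + δ, β + (starRingEnd ℂ) β] with hC
  have key : outer (α•a₁+β•a₂) a₂ + outer a₂ (α•a₁+β•a₂) + outer (γ•a₁+δ•a₂) a₁ + outer a₁ (γ•a₁+δ•a₂)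
      = Aᵀ * C * Aᵀᴴ := by
    ext k l
    simp [outer, Matrix.mul_apply, Fin.sum_univ_two, hA, hC, Matrix.conjTranspose_apply,
      map_add, map_mul, Matrix.transpose_apply, Matrix.vecHead, Matrix.vecTail,
      Matrix.cons_val_zero, Matrix.cons_val_one, Matrix.head_cons]
    ring
  rw [key]
  constructor
  · intro h0
    have := hUT.invertible
    have := hUH.invertible
    have hC0 : C = 0 := by
      have : ⅟Aᵀ * (Aᵀ * C * Aᵀᴴ) * ⅟Aᵀᴴ = C := by
        rw [Matrix.mul_assoc Aᵀ C, invOf_mul_cancel_left, Matrix.mul_assoc, mul_invOf_self, Matrix.mul_one]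
      rw [h0] at this
      simpa using this.symm
    refine ⟨?_, ?_, ?_⟩
    · simpa [hC] using congrFun (congrFun hC0 0) 0
    · simpa [hC] using congrFun (congrFun hC0 0) 1
    · simpa [hC] using congrFun (congrFun hC0 1) 1
  · rintro ⟨h1, h2, h3⟩
    have h2' : (starRingEnd ℂ) α + δ = 0 := by
      have := congrArg (starRingEnd ℂ) h2
      simpa [add_comm] using this
    have : C = 0 := by
      rw [hC, h1, h2, h2', h3]
      ext i j
      fin_cases i <;> fin_cases j <;> simp
    rw [this]
    simp

theorem stmt9 (a₁ a₂ a₁' a₂' : Fin 2 → ℂ)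
    (h : LinearIndependent ℂ ![a₁, a₂]) :
    outer a₁' a₂ + outer a₂ a₁' + outer a₂' a₁ + outer a₁ a₂' = 0 ↔
      ∃ (μ' : ℂ) (l₁ l₂ : ℝ),
        a₁' = μ' • a₁ + (Complex.I * (l₁ : ℂ)) • a₂ ∧
        a₂' = (-(starRingEnd ℂ μ')) • a₂ + (Complex.I * (l₂ : ℂ)) • a₁ := by
  constructor
  · intro h0
    set A : Matrix (Fin 2) (Fin 2) ℂ := Matrix.of ![a₁, a₂] with hA
    have hUA : IsUnit A := by
      rw [← Matrix.linearIndependent_rows_iff_isUnit]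
      exact h
    have hsurj := Matrix.vecMul_surjective_iff_isUnit.mpr hUA
    obtain ⟨c, hc⟩ := hsurj a₁'
    obtain ⟨d, hd⟩ := hsurj a₂'
    have e1 : a₁' = c 0 • a₁ + c 1 • a₂ := by
      funext k
      rw [← hc]
      simp [Matrix.vecMul, dotProduct, Fin.sum_univ_two, hA]
    have e2 : a₂' = d 0 • a₁ + d 1 • a₂ := by
      funext k
      rw [← hd]
      simp [Matrix.vecMul, dotProduct, Fin.sum_univ_two, hA]
    have main := outer_coeffs a₁ a₂ h (c 0) (c 1) (d 0) (d 1)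
    rw [← e1, ← e2] at main
    obtain ⟨h1, h2, h3⟩ := main.mp h0
    have hc1 : c 1 = Complex.I * (((c 1).im : ℝ) : ℂ) := by
      have hre : (c 1).re = 0 := by
        have := congrArg Complex.re h3
        simp [Complex.add_re, Complex.conj_re] at this
        linarith
      apply Complex.ext <;> simp [hre]
    have hd0 : d 0 = Complex.I * (((d 0).im : ℝ) : ℂ) := by
      have hre : (d 0).re = 0 := by
        have := congrArg Complex.re h1
        simp [Complex.add_re, Complex.conj_re] at this
        linarith
      apply Complex.ext <;> simp [hre]
    have hd1 : d 1 = -(starRingEnd ℂ) (c 0) := by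
      have := congrArg (starRingEnd ℂ) h2
      simp at this
      linear_combination this
    refine ⟨c 0, (c 1).im, (d 0).im, ?_, ?_⟩
    · rw [e1, ← hc1]
    · rw [e2, ← hd0, hd1, add_comm]
  · rintro ⟨μ, l₁, l₂, H1, H2⟩
    rw [H1, H2]
    ext k l
    simp [outer, map_add, map_mul, map_neg, Complex.conj_conj, Complex.conj_I,
      Complex.conj_ofReal, Pi.add_apply, Pi.smul_apply, smul_eq_mul]
    ring
end
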